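/- Let t be a sin-tree, u_0 < u_1 < ... the vertices of its left part in lexicographical order, f(t) the forest of bushes rooted at the left hand of the infinite line of descent, and H(f(t)) its height process. Let p(n) = #{k < n : u_k ∉ ℓ_∞(t)} be the number of vertices before u_n not on the infinite line of descent, and let α(p) be the height in t of the root of the bush containing the p-th individual of f(t). Then for all n: H̃_n(t) = (n - p(n)) + H_{p(n)}(f(t)), p(n) = inf{p ≥ 0 : p + α(p) ≥ n}, and α(p(n) - 1) ≤ n - p(n) ≤ α(p(n)); moreover if u_n ∉ ℓ_∞(t) then n - p(n) = α(p(n)). -/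

import Mathlib

open scoped Classical

/-- A sin-tree: an ordered rooted tree (a prefix-closed set of finite words of positive
integers whose children form initial segments) with a single infinite line of descent,
given by its spine `u*_n = spine n`; a vertex has an infinite subtree iff it lies on
the spine. -/
structure SinTree where
  verts : Set (List ℕ)
  root_mem : ([] : List ℕ) ∈ verts
  snoc_mem : ∀ (u : List ℕ) (j : ℕ), u ++ [j] ∈ verts → u ∈ verts ∧ 1 ≤ j
  initial_seg : ∀ (u : List ℕ) (j k : ℕ), u ++ [k] ∈ verts → 1 ≤ j → j ≤ k →
      u ++ [j] ∈ verts
  spine : ℕ → List ℕ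
  spine_mem : ∀ n, spine n ∈ verts
  spine_len : ∀ n, (spine n).length = n
  spine_step : ∀ n, spine n <+: spine (n + 1)
  spine_char : ∀ u ∈ verts, (Set.Infinite {v ∈ verts | u <+: v} ↔ u ∈ Set.range spine)

/-- the left part of a sin-tree: the vertices lying (lexicographically) at or to the
left of the infinite line of descent -/
def SinTree.leftPart (t : SinTree) : Set (List ℕ) :=
  {u ∈ t.verts | ∃ n, u ≤ t.spine n}

namespace STAux

lemma lt_append (u w : List ℕ) (hw : w ≠ []) : u < u ++ w := by
  induction u with
  | nil =>
    cases w with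
    | nil => exact absurd rfl hw
    | cons a w' => exact List.Lex.nil
  | cons a u ih => exact List.Lex.cons ih

lemma le_of_prefix {u v : List ℕ} (h : u <+: v) : u ≤ v := by
  obtain ⟨w, rfl⟩ := h
  rcases eq_or_ne w [] with rfl | hw
  · simp
  · exact le_of_lt (lt_append u w hw)

lemma lt_of_prefix_ne {u v : List ℕ} (h : u <+: v) (hne : u ≠ v) : u < v :=
  lt_of_le_of_ne (le_of_prefix h) hne

lemma lt_of_prefix_len {u v : List ℕ} (h : u <+: v) (hl : u.length < v.length) : u < v :=
  lt_of_prefix_ne h (fun he => by rw [he] at hl; omega)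

lemma le_append_cancel {u x y : List ℕ} (h : u ++ x ≤ u ++ y) : x ≤ y := by
  by_contra hc
  exact absurd (List.Lex.append_left _ (lt_of_not_ge hc) u : u ++ y < u ++ x) (not_lt_of_ge h)

lemma head_le_of_cons_le {a b : ℕ} {s tl : List ℕ} (h : a :: s ≤ b :: tl) : a ≤ b := by
  rcases lt_or_eq_of_le h with h | h
  · exact List.head_le_of_lt h
  · rw [List.cons.injEq] at h; omega

lemma cons_lt_of_head_lt {a b : ℕ} (s tl : List ℕ) (h : a < b) : a :: s < b :: tl :=
  List.Lex.rel h

variable (t : SinTree)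

lemma spine_prefix_mono : ∀ {i j : ℕ}, i ≤ j → t.spine i <+: t.spine j := by
  intro i j h
  induction j with
  | zero => simp_all
  | succ j ih =>
    rcases Nat.lt_or_ge i (j+1) with h' | h'
    · exact (ih (by omega)).trans (t.spine_step j)
    · have : i = j + 1 := by omega
      subst this; rfl

lemma spine_lt_spine {i j : ℕ} (h : i < j) : t.spine i < t.spine j :=
  lt_of_prefix_len (spine_prefix_mono t (le_of_lt h)) (by rw [t.spine_len, t.spine_len]; exact h)

lemma spine_strictMono : StrictMono t.spine := fun _ _ h => spine_lt_spine t h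

lemma spine_inj : Function.Injective t.spine := (spine_strictMono t).injective

/-- verts is prefix-closed -/
lemma verts_prefix_closed : ∀ {v : List ℕ}, v ∈ t.verts → ∀ {u : List ℕ}, u <+: v → u ∈ t.verts := by
  intro v hv
  induction v using List.reverseRecOn with
  | nil => intro u hu; rw [List.prefix_nil.mp hu]; exact hv
  | append_singleton w a ih =>
    intro u hu
    rcases eq_or_lt_of_le hu.length_le with hl | hl
    · rw [hu.eq_of_length hl]; exact hv
    · have hw : w ∈ t.verts := (t.snoc_mem w a hv).1
      refine ih hw ?_
      -- u <+: w ++ [a], u.length < (w++[a]).length = w.length + 1, so u <+: w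
      have := hu
      obtain ⟨s, hs⟩ := this
      simp at hl
      have : u <+: (w ++ [a]).take w.length := by
        refine List.prefix_take_iff.mpr ⟨hu, by omega⟩
      simpa using this

/-- the set of spine-prefix indices of u -/
def M (u : List ℕ) : Set ℕ := {m | t.spine m <+: u}

lemma M_zero_mem (u : List ℕ) : 0 ∈ M t u := by
  have : t.spine 0 = [] := List.length_eq_zero_iff.mp (t.spine_len 0)
  simp [M, this]

lemma M_bddAbove (u : List ℕ) : BddAbove (M t u) := by
  refine ⟨u.length, fun m hm => ?_⟩
  have := hm.length_le
  rwa [t.spine_len] at this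

noncomputable def mstar (u : List ℕ) : ℕ := sSup (M t u)

lemma spine_mstar_prefix (u : List ℕ) : t.spine (mstar t u) <+: u :=
  Nat.sSup_mem ⟨0, M_zero_mem t u⟩ (M_bddAbove t u)

lemma prefix_iff_le_mstar {u : List ℕ} {i : ℕ} : t.spine i <+: u ↔ i ≤ mstar t u := by
  constructor
  · intro h; exact le_csSup (M_bddAbove t u) h
  · intro h; exact (spine_prefix_mono t h).trans (spine_mstar_prefix t u)

lemma mstar_le_len (u : List ℕ) : mstar t u ≤ u.length := by
  have := (spine_mstar_prefix t u).length_le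
  rwa [t.spine_len] at this

end STAux

namespace STAux2
open STAux
variable (t : SinTree)

lemma mstar_lt_len {u : List ℕ} (hns : u ∉ Set.range t.spine) : mstar t u < u.length := by
  rcases eq_or_lt_of_le (mstar_le_len t u) with h | h
  · exfalso
    exact hns ⟨mstar t u, (spine_mstar_prefix t u).eq_of_length (by rw [t.spine_len, h])⟩
  · exact h

lemma spine_lt_of_le_mstar {u : List ℕ} {i : ℕ} (hns : u ∉ Set.range t.spine)
    (h : i ≤ mstar t u) : t.spine i < u :=
  lt_of_prefix_ne ((prefix_iff_le_mstar t).mpr h) (fun he => hns ⟨i, he⟩)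

lemma bush_lt_spine_succ {u : List ℕ} (hu : u ∈ t.leftPart) (hns : u ∉ Set.range t.spine) :
    u < t.spine (mstar t u + 1) := by
  set m := mstar t u with hm
  obtain ⟨n, hn⟩ := hu.2
  have hmn : m < n := by
    by_contra hc
    push_neg at hc
    have h1 : t.spine n <+: u := (spine_prefix_mono t hc).trans (spine_mstar_prefix t u)
    have : u = t.spine n := le_antisymm hn (le_of_prefix h1)
    exact hns ⟨n, this.symm⟩
  -- spine (m+1) = spine m ++ [l]
  obtain ⟨c, hc⟩ := t.spine_step m
  have hcl : c.length = 1 := by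
    have := congrArg List.length hc
    simp [t.spine_len] at this
    omega
  obtain ⟨l, hl⟩ : ∃ l, c = [l] := by
    rcases c with _ | ⟨l, c'⟩
    · simp at hcl
    · simp at hcl
      exact ⟨l, by rw [hcl]⟩
  subst hl
  -- spine n = spine m ++ l :: rest
  obtain ⟨rest, hrest⟩ := spine_prefix_mono t (show m + 1 ≤ n by omega)
  rw [← hc] at hrest
  -- u = spine m ++ a :: w
  obtain ⟨d, hd⟩ := spine_mstar_prefix t u
  have hdne : d ≠ [] := by
    intro h
    rw [h, List.append_nil] at hd
    exact hns ⟨m, hd⟩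
  obtain ⟨a, w, haw⟩ : ∃ a w, d = a :: w := by
    rcases d with _ | ⟨a, w⟩
    · exact absurd rfl hdne
    · exact ⟨a, w, rfl⟩
  subst haw
  rw [← hd] at hn hns ⊢
  rw [← hrest] at hn
  simp only [← hm] at hn hns hd
  have hcmp : (a :: w : List ℕ) ≤ l :: rest := by
    rw [List.append_assoc] at hn
    exact le_append_cancel hn
  have hal : a ≤ l := head_le_of_cons_le hcmp
  have hane : a ≠ l := by
    rintro rfl
    have : t.spine (m + 1) <+: t.spine m ++ a :: w := by
      rw [← hc]
      rw [List.prefix_append_right_inj]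
      exact ⟨w, rfl⟩
    have := (prefix_iff_le_mstar t).mp this
    rw [hd] at this
    omega
  rw [← hc]
  exact List.Lex.append_left _ (cons_lt_of_head_lt w [] (by omega)) _

lemma bush_lt_spine {u : List ℕ} (hu : u ∈ t.leftPart) (hns : u ∉ Set.range t.spine)
    {i : ℕ} (hi : mstar t u < i) : u < t.spine i :=
  lt_of_lt_of_le (bush_lt_spine_succ t hu hns) (le_of_prefix (spine_prefix_mono t hi))

lemma bush_root {u : List ℕ} (hu : u ∈ t.leftPart) (hns : u ∉ Set.range t.spine)
    (hlen : mstar t u + 1 < u.length) :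
    ∃ r, r ∈ t.leftPart ∧ r ∉ Set.range t.spine ∧ r < u ∧ mstar t r = mstar t u := by
  set m := mstar t u with hm
  obtain ⟨d, hd⟩ := spine_mstar_prefix t u
  obtain ⟨a, w, haw⟩ : ∃ a w, d = a :: w := by
    rcases d with _ | ⟨a, w⟩
    · exfalso; rw [← hd] at hlen; simp [t.spine_len] at hlen; omega
    · exact ⟨a, w, rfl⟩
  subst haw
  refine ⟨t.spine m ++ [a], ?_, ?_, ?_, ?_⟩
  · constructor
    · refine verts_prefix_closed t hu.1 ?_
      rw [← hd, List.prefix_append_right_inj]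
      exact ⟨w, rfl⟩
    · obtain ⟨n, hn⟩ := hu.2
      refine ⟨n, le_trans ?_ hn⟩
      refine le_of_prefix ?_
      rw [← hd, List.prefix_append_right_inj]
      exact ⟨w, rfl⟩
  · rintro ⟨i, hi⟩
    have hilen : i = m + 1 := by
      have := congrArg List.length hi
      simp [t.spine_len] at this
      omega
    subst hilen
    have : t.spine (m + 1) <+: u := by
      rw [hi, ← hd, List.prefix_append_right_inj]
      exact ⟨w, rfl⟩
    have := (prefix_iff_le_mstar t).mp this
    omega
  · refine lt_of_prefix_len ?_ ?_
    · rw [← hd, List.prefix_append_right_inj]; exact ⟨w, rfl⟩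
    · simp [t.spine_len]; omega
  · have h1 : m ≤ mstar t (t.spine m ++ [a]) :=
      (prefix_iff_le_mstar t).mp ⟨[a], rfl⟩
    have h2 : mstar t (t.spine m ++ [a]) ≤ m + 1 := by
      have := mstar_le_len t (t.spine m ++ [a])
      simpa [t.spine_len] using this
    rcases eq_or_lt_of_le h2 with h3 | h3
    · exfalso
      have hp := spine_mstar_prefix t (t.spine m ++ [a])
      rw [h3] at hp
      have heq : t.spine (m + 1) = t.spine m ++ [a] :=
        hp.eq_of_length (by simp [t.spine_len])
      -- then spine (m+1) <+: u
      have : t.spine (m + 1) <+: u := by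
        rw [heq, ← hd, List.prefix_append_right_inj]
        exact ⟨w, rfl⟩
      have := (prefix_iff_le_mstar t).mp this
      omega
    · omega

end STAux2

/-- Let `t` be a sin-tree, `e` the lexicographical enumeration of its
left part (so `H̃ n = |e n|` is the left height process), `p n` the number of vertices
before `e n` not on the infinite line of descent, `nIdx p` the index in `e` of the
`p`-th individual of the forest `f(t)` of left bushes, `α p` the height in `t` of the
root of the bush containing the `p`-th individual of `f(t)`, and
`Hf p = |e (nIdx p)| - α p` the height process of `f(t)`.  Then for all `n`:
`H̃ n = (n - p n) + Hf (p n)`;  `p n = inf {p : p + α p ≥ n}`;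
`α (p n - 1) ≤ n - p n ≤ α (p n)` (the left inequality for `p n ≥ 1`);  and if
`e n ∉ ℓ_∞(t)` then `n - p n = α (p n)`. -/
theorem sin_tree_spinal_decomposition
    (t : SinTree) (e : ℕ → List ℕ) (he : StrictMono e)
    (hrange : Set.range e = t.leftPart)
    (hbushes : Set.Infinite (t.leftPart \ Set.range t.spine))
    (p : ℕ → ℕ)
    (hp : ∀ n, p n = ((Finset.range n).filter fun k => e k ∉ Set.range t.spine).card)
    (nIdx : ℕ → ℕ) (hnIdx : nIdx = Nat.nth (fun k => e k ∉ Set.range t.spine))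
    (α : ℕ → ℕ)
    (hα : ∀ j, α j = sSup {m | t.spine m <+: e (nIdx j)} + 1)
    (Hf : ℕ → ℕ) (hHf : ∀ j, Hf j = (e (nIdx j)).length - α j) :
    (∀ n, (e n).length = (n - p n) + Hf (p n)) ∧
    (∀ n, p n = sInf {j | n ≤ j + α j}) ∧
    (∀ n, n - p n ≤ α (p n)) ∧
    (∀ n, 1 ≤ p n → α (p n - 1) ≤ n - p n) ∧
    (∀ n, e n ∉ Set.range t.spine → n - p n = α (p n)) := by
  classical
  set Q : ℕ → Prop := fun k => e k ∉ Set.range t.spine with hQ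
  have heL : ∀ n, e n ∈ t.leftPart := fun n => hrange ▸ Set.mem_range_self n
  -- Q is an infinite predicate
  have hQinf : (setOf Q).Infinite := by
    have hsub : t.leftPart \ Set.range t.spine ⊆ e '' (setOf Q) := by
      rintro u ⟨hu1, hu2⟩
      rw [← hrange] at hu1
      obtain ⟨k, rfl⟩ := hu1
      exact ⟨k, hu2, rfl⟩
    exact Set.Infinite.of_image e (hbushes.mono hsub)
  -- p is the count of Q
  have hpc : ∀ n, p n = Nat.count Q n := by
    intro n
    rw [hp n, Nat.count_eq_card_filter_range]
  have hple : ∀ n, p n ≤ n := by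
    intro n
    rw [hp n]
    exact le_trans (Finset.card_filter_le _ _) (by simp)
  -- nIdx basic facts
  have hnQ : ∀ j, Q (nIdx j) := fun j => by
    rw [hnIdx]; exact Nat.nth_mem_of_infinite hQinf j
  have hnmono : StrictMono nIdx := by rw [hnIdx]; exact Nat.nth_strictMono hQinf
  have hcount_nIdx : ∀ j, Nat.count Q (nIdx j) = j := by
    intro j
    rw [hnIdx]
    exact Nat.count_nth (fun hf => absurd hf hQinf)
  have hq_nIdx_eq : ∀ n, Q n → nIdx (p n) = n := by
    intro n hn
    rw [hpc, hnIdx]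
    exact Nat.nth_count hn
  have hnIdx_lt : ∀ j n, j < p n → nIdx j < n := by
    intro j n hj
    by_contra hc
    push_neg at hc
    have h1 : Nat.count Q n ≤ Nat.count Q (nIdx j) := Nat.count_monotone Q hc
    rw [hcount_nIdx j, ← hpc n] at h1
    omega
  have hn_le_nIdx : ∀ n, n ≤ nIdx (p n) := by
    intro n
    by_contra hc
    push_neg at hc
    have h1 : Nat.count Q (nIdx (p n) + 1) = Nat.count Q (nIdx (p n)) + 1 := by
      rw [Nat.count_succ, if_pos (hnQ (p n))]
    have h2 : Nat.count Q (nIdx (p n) + 1) ≤ Nat.count Q n := Nat.count_monotone Q (by omega)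
    rw [hcount_nIdx (p n)] at h1
    rw [← hpc n] at h2
    omega
  have hmin : ∀ n k, n ≤ k → Q k → nIdx (p n) ≤ k := by
    intro n k hnk hk
    have h1 : p n ≤ Nat.count Q k := by
      rw [hpc]; exact Nat.count_monotone Q hnk
    have h2 : nIdx (p n) ≤ nIdx (Nat.count Q k) := hnmono.monotone h1
    have h3 : nIdx (Nat.count Q k) = k := by rw [hnIdx]; exact Nat.nth_count hk
    omega
  -- spine indices
  have hsIdx : ∀ i, ∃ k, e k = t.spine i := by
    intro i
    have h1 : t.spine i ∈ t.leftPart := ⟨t.spine_mem i, ⟨i, le_refl _⟩⟩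
    rw [← hrange] at h1
    exact h1
  choose sIdx hsIdx_eq using hsIdx
  have hsinj : Function.Injective sIdx := by
    intro i j h
    have := hsIdx_eq i
    rw [h, hsIdx_eq j] at this
    exact STAux.spine_inj t this.symm
  -- α in terms of mstar
  have hαm : ∀ j, α j = STAux.mstar t (e (nIdx j)) + 1 := fun j => hα j
  -- the spine filter
  set A : ℕ → Finset ℕ := fun n => (Finset.range n).filter (fun k => e k ∈ Set.range t.spine)
    with hA
  have hAcard : ∀ n, (A n).card = n - p n := by
    intro n
    have h1 : ((Finset.range n).filter (fun k => e k ∈ Set.range t.spine)).card +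
        ((Finset.range n).filter (fun k => e k ∉ Set.range t.spine)).card = n := by
      have h0 := Finset.card_filter_add_card_filter_not
        (s := Finset.range n) (p := fun k => e k ∈ Set.range t.spine)
      simpa using h0
    have h2 : p n = ((Finset.range n).filter
        (fun k => e k ∉ Set.range t.spine)).card := hp n
    simp only [hA]
    omega
  have hA_lower : ∀ n j, nIdx j < n →
      (Finset.range (STAux.mstar t (e (nIdx j)) + 1)).image sIdx ⊆ A n := by
    intro n j hj
    intro k hk
    rw [Finset.mem_image] at hk
    obtain ⟨i, hi, rfl⟩ := hk
    rw [Finset.mem_range] at hi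
    have h1 : t.spine i < e (nIdx j) :=
      STAux2.spine_lt_of_le_mstar t (hnQ j) (by omega)
    rw [← hsIdx_eq i] at h1
    have h2 : sIdx i < nIdx j := he.lt_iff_lt.mp h1
    rw [hA, Finset.mem_filter, Finset.mem_range]
    exact ⟨by omega, ⟨i, (hsIdx_eq i).symm⟩⟩
  have hA_spine : ∀ n m, e n = t.spine m → A n = (Finset.range m).image sIdx := by
    intro n m hm
    ext k
    rw [hA, Finset.mem_filter, Finset.mem_range, Finset.mem_image]
    constructor
    · rintro ⟨hkn, i, hi⟩
      have hks : k = sIdx i := he.injective (by rw [hsIdx_eq i, hi])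
      have h1 : e k < e n := he hkn
      rw [← hi, hm] at h1
      have h2 : i < m := (STAux.spine_strictMono t).lt_iff_lt.mp h1
      exact ⟨i, Finset.mem_range.mpr h2, hks.symm⟩
    · rintro ⟨i, hi, rfl⟩
      rw [Finset.mem_range] at hi
      have h1 : e (sIdx i) < e n := by
        rw [hsIdx_eq i, hm]
        exact STAux.spine_lt_spine t hi
      exact ⟨he.lt_iff_lt.mp h1, ⟨i, (hsIdx_eq i).symm⟩⟩
  have hA_bush : ∀ n, Q n → A n = (Finset.range (STAux.mstar t (e n) + 1)).image sIdx := by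
    intro n hn
    ext k
    rw [hA, Finset.mem_filter, Finset.mem_range, Finset.mem_image]
    constructor
    · rintro ⟨hkn, i, hi⟩
      have hks : k = sIdx i := he.injective (by rw [hsIdx_eq i, hi])
      have h1 : e k < e n := he hkn
      have h2 : i < STAux.mstar t (e n) + 1 := by
        by_contra hc
        push_neg at hc
        have h3 : e n < t.spine i := STAux2.bush_lt_spine t (heL n) hn (by omega)
        rw [hi] at h3
        exact absurd (h1.trans h3) (lt_irrefl _)
      exact ⟨i, Finset.mem_range.mpr h2, hks.symm⟩
    · rintro ⟨i, hi, rfl⟩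
      rw [Finset.mem_range] at hi
      have h1 : e (sIdx i) < e n := by
        rw [hsIdx_eq i]
        exact STAux2.spine_lt_of_le_mstar t hn (by omega)
      exact ⟨he.lt_iff_lt.mp h1, ⟨i, (hsIdx_eq i).symm⟩⟩
  -- bush case package
  have caseBush : ∀ n, Q n →
      n - p n = α (p n) ∧ (e n).length = (n - p n) + Hf (p n) := by
    intro n hn
    have hidx : nIdx (p n) = n := hq_nIdx_eq n hn
    have hcard : (A n).card = STAux.mstar t (e n) + 1 := by
      rw [hA_bush n hn, Finset.card_image_of_injective _ hsinj, Finset.card_range]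
    have hnp : n - p n = α (p n) := by
      rw [hαm (p n), hidx, ← hAcard n, hcard]
    refine ⟨hnp, ?_⟩
    have hlen : STAux.mstar t (e n) + 1 ≤ (e n).length := STAux2.mstar_lt_len t hn
    have hHfn : Hf (p n) = (e n).length - ((STAux.mstar t (e n)) + 1) := by
      rw [hHf (p n), hαm (p n), hidx]
    rw [hnp, hαm (p n), hidx, hHfn]
    omega
  -- spine case package
  have caseSpine : ∀ n, ¬ Q n →
      (e n).length = n - p n ∧ n - p n ≤ α (p n) ∧ Hf (p n) = 0 := by
    intro n hn
    have hen : e n ∈ Set.range t.spine := not_not.mp hn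
    obtain ⟨m, hm⟩ := hen
    have hcard : (A n).card = m := by
      rw [hA_spine n m hm.symm, Finset.card_image_of_injective _ hsinj, Finset.card_range]
    have hnp : n - p n = m := by rw [← hAcard n, hcard]
    have hlenm : (e n).length = m := by rw [← hm, t.spine_len]
    set k := nIdx (p n) with hk
    set m' := STAux.mstar t (e (nIdx (p n))) with hm'
    have hbQ : Q k := hnQ (p n)
    have hbL : e k ∈ t.leftPart := heL k
    have hnk : n ≤ k := hn_le_nIdx n
    have hmm' : m ≤ m' := by
      by_contra hc
      push_neg at hc
      have h1 : e k < t.spine m := STAux2.bush_lt_spine t hbL hbQ hc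
      rw [hm] at h1
      have h2 : e n ≤ e k := he.monotone hnk
      exact absurd (lt_of_le_of_lt h2 h1) (lt_irrefl _)
    have hblen : (e k).length = m' + 1 := by
      rcases eq_or_lt_of_le (show m' + 1 ≤ (e k).length from STAux2.mstar_lt_len t hbQ)
        with h | h
      · omega
      · exfalso
        obtain ⟨r, hrL, hrns, hrlt, hrm⟩ := STAux2.bush_root t hbL hbQ h
        have hr' : r ∈ Set.range e := by rw [hrange]; exact hrL
        obtain ⟨k', hk'⟩ := hr'
        have hQk' : Q k' := by rw [hQ]; simp only [Set.mem_setOf_eq]; rw [hk']; exact hrns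
        have hnk' : n ≤ k' := by
          have h1 : t.spine m' < r := by
            refine STAux2.spine_lt_of_le_mstar t hrns ?_
            rw [hrm]
          have h2 : e n ≤ t.spine m' := by
            rw [← hm]
            exact STAux.le_of_prefix (STAux.spine_prefix_mono t hmm')
          have h3 : e n < e k' := by rw [hk']; exact lt_of_le_of_lt h2 h1
          exact le_of_lt (he.lt_iff_lt.mp h3)
        have h4 : k ≤ k' := hmin n k' hnk' hQk'
        have h5 : e k' < e k := by rw [hk']; exact hrlt
        have h6 : k' < k := he.lt_iff_lt.mp h5
        omega
    have hHf0 : Hf (p n) = 0 := by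
      rw [hHf (p n), hαm (p n), ← hm', ← hk, hblen]
      omega
    refine ⟨by omega, ?_, hHf0⟩
    rw [hαm (p n), ← hm', hnp]
    omega
  -- lower bound for claims 2 and 4
  have hlow : ∀ n j, nIdx j < n → α j ≤ n - p n := by
    intro n j hj
    have h1 := Finset.card_le_card (hA_lower n j hj)
    rw [Finset.card_image_of_injective _ hsinj, Finset.card_range] at h1
    rw [hαm j, ← hAcard n]
    exact h1
  refine ⟨?_, ?_, ?_, ?_, ?_⟩
  · intro n
    by_cases hn : Q n
    · exact (caseBush n hn).2
    · obtain ⟨h1, _, h3⟩ := caseSpine n hn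
      omega
  · intro n
    have hmem : n ≤ p n + α (p n) := by
      have h1 : n - p n ≤ α (p n) := by
        by_cases hn : Q n
        · exact le_of_eq (caseBush n hn).1
        · exact (caseSpine n hn).2.1
      have := hple n
      omega
    have hnotmem : ∀ j, j < p n → ¬ (n ≤ j + α j) := by
      intro j hj
      have h1 : nIdx j < n := hnIdx_lt j n hj
      have h2 : α j ≤ n - p n := hlow n j h1
      have h3 := hple n
      omega
    refine le_antisymm ?_ (Nat.sInf_le hmem)
    have hne : {j | n ≤ j + α j}.Nonempty := ⟨p n, hmem⟩
    have h4 := Nat.sInf_mem hne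
    by_contra hc
    push_neg at hc
    exact hnotmem _ hc h4
  · intro n
    by_cases hn : Q n
    · exact le_of_eq (caseBush n hn).1
    · exact (caseSpine n hn).2.1
  · intro n hpn
    have h1 : nIdx (p n - 1) < n := hnIdx_lt (p n - 1) n (by omega)
    exact hlow n (p n - 1) h1
  · intro n hn
    exact (caseBush n hn).1
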